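/- Let s ∈ {A,B}^ω be a balanced word with 0 < f_A(s) ≤ 1/3 containing no occurrence of the factor ABA (hence no occurrence of AA). Consider the non-alternating Domino game Γ_s({a,b}, ℱ₂, ℤ) on ℤ with alphabet {a,b} and forbidden patterns ℱ₂ = { w ∈ {a,b}^9 : |w|_a ≥ 5 } (all words of length 9 containing at least 5 letters a). Then player B has a winning strategy: B can play so that no window of 9 consecutive coloured cells ever contains 5 or more cells coloured a. -/

import Mathlib

open Filter Topology

attribute [local instance] Classical.propDecidable

/-- The two players. -/
inductive Player | A | B
deriving DecidableEq

/-- A (possibly partial) colouring of `ℤ`: `none` means uncoloured.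
Colours are natural numbers; the alphabet of size `m` is `{0, …, m-1}`. -/
abbrev BoardZ := ℤ → Option ℕ

/-- A finite pattern on `ℤ`, encoded as a list of tiles (cell, colour). -/
abbrev PatternZ := List (ℤ × ℕ)

/-- A move: `none` is a pass, `some (i, a)` colours cell `i` with colour `a`. -/
abbrev MoveZ := Option (ℤ × ℕ)

/-- A (positional) strategy: a move for every position. -/
abbrev StrategyZ := BoardZ → MoveZ

/-- The pattern `p` occurs in the board `x` translated by `t`. -/
def occursAtZ (p : PatternZ) (x : BoardZ) (t : ℤ) : Prop :=
  ∀ q ∈ p, x (t + q.1) = some q.2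

/-- A position is final when a translate of some forbidden pattern occurs. -/
def isFinalZ (F : Set PatternZ) (x : BoardZ) : Prop :=
  ∃ p ∈ F, ∃ t : ℤ, occursAtZ p x t

/-- A colouring move: an uncoloured cell of `ℤ` receives a colour of the alphabet
`{0, …, m-1}` (a pass is not a colouring move). -/
def legalColour (m : ℕ) (x : BoardZ) : MoveZ → Prop
  | none => False
  | some (i, a) => x i = none ∧ a < m

/-- Legality of a move in the game with passes allowed. -/
def legalZ (m : ℕ) (x : BoardZ) (mv : MoveZ) : Prop :=
  mv = none ∨ legalColour m x mv

def applyZ (x : BoardZ) : MoveZ → BoardZ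
  | none => x
  | some (i, a) => Function.update x i (some a)

/-- One step of the game: the move proposed by the strategy is played if legal
(an illegal move is treated as a pass). -/
noncomputable def stepZ (m : ℕ) (st : StrategyZ) (x : BoardZ) : BoardZ :=
  if legalZ m x (st x) then applyZ x (st x) else x

/-- The play generated by strategies `stA`, `stB` with turn order `s`,
starting from the empty board. -/
noncomputable def playZ (m : ℕ) (s : ℕ → Player) (stA stB : StrategyZ) : ℕ → BoardZ
  | 0 => fun _ => none
  | t + 1 => stepZ m (match s t with | .A => stA | .B => stB) (playZ m s stA stB t)

/-- The alternating turn order: `A` plays first. -/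
def alt : ℕ → Player := fun t => if t % 2 = 0 then .A else .B

/-- A strategy for the no-pass game: on every board having an uncoloured cell,
it plays a legal colouring move (never a pass). -/
def NoPassStrategy (m : ℕ) (st : StrategyZ) : Prop :=
  ∀ x : BoardZ, (∃ i : ℤ, x i = none) → legalColour m x (st x)

/-- The number of occurrences of the letter `A` in the factor `s_{⟦i, i+n⟧}`. -/
def countA (s : ℕ → Player) (i n : ℕ) : ℕ :=
  ((Finset.range (n + 1)).filter (fun l => s (i + l) = Player.A)).card

/-- The word `s` is balanced: any two factors of the same length have numbers of
occurrences of `A` differing by at most 1. -/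
def BalancedWord (s : ℕ → Player) : Prop :=
  ∀ i j n : ℕ, ((countA s i n : ℤ) - (countA s j n : ℤ)).natAbs ≤ 1

/-- The forbidden patterns `ℱ₂`: all words of length 9 over the alphabet
`{a, b} = {0, 1}` containing at least 5 letters `a = 0`. -/
def F2 : Set PatternZ :=
  {p | ∃ w : ℕ → ℕ, (∀ l < 9, w l < 2) ∧
        5 ≤ ((Finset.range 9).filter (fun l => w l = 0)).card ∧
        p = (List.range 9).map (fun l : ℕ => ((l : ℤ), w l))}

section Aux

/-- A cell is deficient: it is uncoloured but its triple contains an `a`. -/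
def Deficient (x : BoardZ) (j : ℤ) : Prop :=
  x j = none ∧ ∃ k : ℤ, k / 3 = j / 3 ∧ x k = some 0

/-- B's strategy: repair a deficient cell with a `b`, else pass. -/
noncomputable def stBdef : StrategyZ := fun x =>
  if h : ∃ j, Deficient x j then some (h.choose, 1) else none

/-- Every triple contains at most one `a`. -/
def GoodB (x : BoardZ) : Prop :=
  ∀ i j : ℤ, i ≠ j → i / 3 = j / 3 → x i = some 0 → x j = some 0 → False

/-- Allowed number of deficient cells at time `t`. -/
def bndB (s : ℕ → Player) : ℕ → ℕ
  | 0 => 0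
  | 1 => if s 0 = Player.A then 2 else 0
  | (t+2) => if s (t+1) = Player.A then 2 else if s t = Player.A then 1 else 0

lemma player_ne_A {p : Player} (h : p ≠ Player.A) : p = Player.B := by
  cases p <;> simp_all

lemma not_final_of_goodB (x : BoardZ) (hg : GoodB x) : ¬ isFinalZ F2 x := by
  rintro ⟨p, ⟨w, hw2, hw5, rfl⟩, t, hocc⟩
  have hx : ∀ l : ℕ, l < 9 → x (t + l) = some (w l) := by
    intro l hl
    exact hocc ((l : ℤ), w l) (List.mem_map.2 ⟨l, List.mem_range.2 hl, rfl⟩)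
  set T := (Finset.range 9).filter (fun l => w l = 0) with hT
  have hmem : ∀ l ∈ T, l < 9 ∧ x (t + l) = some 0 := by
    intro l hl
    rw [hT, Finset.mem_filter, Finset.mem_range] at hl
    exact ⟨hl.1, by rw [hx l hl.1, hl.2]⟩
  have hsub : ∀ l ∈ T, (t + (l : ℤ)) / 3 ∈ Finset.Icc (t / 3) (t / 3 + 3) := by
    intro l hl
    obtain ⟨hl9, -⟩ := hmem l hl
    rw [Finset.mem_Icc]
    constructor
    · exact Int.ediv_le_ediv (by norm_num) (by omega)
    · have h1 : t + (l : ℤ) ≤ t + 3 * 3 := by omega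
      have := Int.ediv_le_ediv (c := 3) (by norm_num) h1
      rwa [Int.add_mul_ediv_right t 3 (by norm_num)] at this
  have hinj : Set.InjOn (fun l : ℕ => (t + (l : ℤ)) / 3) T := by
    intro l1 h1 l2 h2 he
    by_contra hne
    obtain ⟨-, ha1⟩ := hmem l1 h1
    obtain ⟨-, ha2⟩ := hmem l2 h2
    exact hg (t + l1) (t + l2) (by omega) he ha1 ha2
  have hcard := Finset.card_le_card_of_injOn _ hsub hinj
  rw [Int.card_Icc] at hcard
  omega

lemma good_update_b (x : BoardZ) (i : ℤ) (hx : GoodB x) :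
    GoodB (Function.update x i (some 1)) := by
  intro a b hne htri ha hb
  rw [Function.update_apply] at ha hb
  split at ha
  · simp at ha
  · split at hb
    · simp at hb
    · exact hx a b hne htri ha hb

lemma def_update_b (x : BoardZ) (i : ℤ) (j : ℤ)
    (hj : Deficient (Function.update x i (some 1)) j) : Deficient x j ∧ j ≠ i := by
  obtain ⟨hjn, k, hk3, hk0⟩ := hj
  have hji : j ≠ i := by
    intro h; rw [h, Function.update_self] at hjn; exact Option.some_ne_none _ hjn
  rw [Function.update_of_ne hji] at hjn
  have hki : k ≠ i := by
    intro h; rw [h, Function.update_self] at hk0; simp at hk0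
  rw [Function.update_of_ne hki] at hk0
  exact ⟨⟨hjn, k, hk3, hk0⟩, hji⟩

/-- Effect of a B-move (our strategy). -/
lemma stepB_main (x : BoardZ) (hg : GoodB x) (S : Finset ℤ)
    (hcov : ∀ j, Deficient x j → j ∈ S) :
    GoodB (stepZ 2 stBdef x) ∧ ∃ S' : Finset ℤ, S'.card ≤ S.card - 1 ∧
      ∀ j, Deficient (stepZ 2 stBdef x) j → j ∈ S' := by
  by_cases h : ∃ j, Deficient x j
  · have hmv : stBdef x = some (h.choose, 1) := by rw [stBdef, dif_pos h]
    have hleg : legalZ 2 x (stBdef x) := by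
      rw [hmv]; exact Or.inr ⟨h.choose_spec.1, by norm_num⟩
    have hy : stepZ 2 stBdef x = Function.update x h.choose (some 1) := by
      rw [stepZ, if_pos hleg, hmv]; rfl
    rw [hy]
    refine ⟨good_update_b x _ hg, S.erase h.choose, ?_, ?_⟩
    · rw [Finset.card_erase_of_mem (hcov _ h.choose_spec)]
    · intro j hj
      obtain ⟨hdj, hne⟩ := def_update_b x _ j hj
      exact Finset.mem_erase.2 ⟨hne, hcov j hdj⟩
  · have hmv : stBdef x = none := by rw [stBdef, dif_neg h]
    have hy : stepZ 2 stBdef x = x := by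
      rw [stepZ, if_pos (show legalZ 2 x (stBdef x) from Or.inl hmv), hmv]
      rfl
    rw [hy]
    exact ⟨hg, ∅, by simp, fun j hj => absurd ⟨j, hj⟩ h⟩

/-- Effect of any move when there is no deficiency. -/
lemma stepA_main (st : StrategyZ) (x : BoardZ) (hg : GoodB x)
    (hd : ∀ j, ¬ Deficient x j) :
    GoodB (stepZ 2 st x) ∧ ∃ S : Finset ℤ, S.card ≤ 2 ∧
      ∀ j, Deficient (stepZ 2 st x) j → j ∈ S := by
  have key : stepZ 2 st x = x ∨
      ∃ i c, x i = none ∧ c < 2 ∧ stepZ 2 st x = Function.update x i (some c) := by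
    rw [stepZ]
    split
    · rename_i hleg
      rcases hleg with hpass | hcol
      · rw [hpass]; exact Or.inl rfl
      · rcases hmv : st x with - | ⟨i, c⟩
        · rw [hmv] at hcol; exact absurd hcol (by simp [legalColour])
        · rw [hmv] at hcol
          exact Or.inr ⟨i, c, hcol.1, hcol.2, rfl⟩
    · exact Or.inl rfl
  rcases key with hy | ⟨i, c, hin, hc2, hy⟩
  · rw [hy]; exact ⟨hg, ∅, by simp, fun j hj => absurd hj (hd j)⟩
  · rw [hy]
    rcases (by omega : c = 0 ∨ c = 1) with rfl | rfl
    · -- colouring with `a`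
      have hno : ∀ k : ℤ, k / 3 = i / 3 → x k ≠ some 0 := by
        intro k hk hk0
        exact hd i ⟨hin, k, hk, hk0⟩
      have hGood : GoodB (Function.update x i (some 0)) := by
        intro a b hne htri ha hb
        rw [Function.update_apply] at ha hb
        by_cases hai : a = i
        · have hbi : ¬ b = i := fun hbi => hne (hai.trans hbi.symm)
          rw [if_neg hbi] at hb
          have htri' : b / 3 = i / 3 := by rw [← htri, hai]
          exact hno b htri' hb
        · rw [if_neg hai] at ha
          by_cases hbi : b = i
          · have htri' : a / 3 = i / 3 := by rw [htri, hbi]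
            exact hno a htri' ha
          · rw [if_neg hbi] at hb
            exact hg a b hne htri ha hb
      refine ⟨hGood, ({3 * (i / 3), 3 * (i / 3) + 1, 3 * (i / 3) + 2} : Finset ℤ).erase i,
        ?_, ?_⟩
      · have hiMem : i ∈ ({3 * (i / 3), 3 * (i / 3) + 1, 3 * (i / 3) + 2} : Finset ℤ) := by
          simp only [Finset.mem_insert, Finset.mem_singleton]; omega
        rw [Finset.card_erase_of_mem hiMem]
        have h3 : ({3 * (i / 3), 3 * (i / 3) + 1, 3 * (i / 3) + 2} : Finset ℤ).card ≤ 3 := by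
          apply le_trans (Finset.card_insert_le _ _)
          have := Finset.card_insert_le (3 * (i / 3) + 1)
            ({3 * (i / 3) + 2} : Finset ℤ)
          simp only [Finset.card_singleton] at this ⊢
          omega
        omega
      · intro j hj
        obtain ⟨hjn, k, hk3, hk0⟩ := hj
        have hji : j ≠ i := by
          intro h; rw [h, Function.update_self] at hjn; exact Option.some_ne_none _ hjn
        rw [Function.update_of_ne hji] at hjn
        by_cases hki : k = i
        · subst hki
          rw [Finset.mem_erase]
          refine ⟨hji, ?_⟩
          simp only [Finset.mem_insert, Finset.mem_singleton]
          omega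
        · rw [Function.update_of_ne hki] at hk0
          exact absurd ⟨hjn, k, hk3, hk0⟩ (hd j)
    · -- colouring with `b`
      refine ⟨good_update_b x i hg, ∅, by simp, ?_⟩
      intro j hj
      exact absurd (def_update_b x i j hj).1 (hd j)

lemma countA_succ (s : ℕ → Player) (i n : ℕ) :
    countA s i (n + 1) = countA s i n + (if s (i + (n + 1)) = Player.A then 1 else 0) := by
  unfold countA
  rw [show n + 1 + 1 = (n + 1) + 1 from rfl, Finset.range_add_one, Finset.filter_insert]
  split
  · rw [Finset.card_insert_of_notMem (by simp)]
  · simp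

lemma countA_zero (s : ℕ → Player) (j : ℕ) :
    countA s j 0 = if s j = Player.A then 1 else 0 := by
  unfold countA
  rw [Finset.range_one, Finset.filter_singleton]
  split <;> split <;> simp_all

lemma countA_split (s : ℕ → Player) (k : ℕ) :
    countA s 0 (2 * (k + 1) + 1) =
      countA s 0 (2 * k + 1) + countA s (2 * k + 2) 1 := by
  have h1 : countA s (2 * k + 2) 1 =
      (if s (2 * k + 2) = Player.A then 1 else 0) +
      (if s (2 * k + 3) = Player.A then 1 else 0) := by
    rw [show (1 : ℕ) = 0 + 1 from rfl, countA_succ, countA_zero]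
  have e1 : 2 * (k + 1) + 1 = (2 * k + 2) + 1 := by ring
  have e2 : 2 * k + 2 = (2 * k + 1) + 1 := by ring
  rw [e1, countA_succ, e2, countA_succ, h1]
  have e3 : 0 + (2 * k + 1 + 1) = 2 * k + 2 := by ring
  have e4 : 0 + (2 * k + 2 + 1) = 2 * k + 3 := by ring
  rw [e3, e4]
  ring

end Aux

section Main

variable {s : ℕ → Player}

lemma bndB_A (hAA : ∀ i, ¬ (s i = Player.A ∧ s (i + 1) = Player.A))
    (hABA : ∀ i, ¬ (s i = Player.A ∧ s (i + 1) = Player.B ∧ s (i + 2) = Player.A))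
    {t : ℕ} (h : s t = Player.A) : bndB s t = 0 := by
  match t with
  | 0 => rfl
  | 1 =>
    have h0 : s 0 ≠ Player.A := fun h0 => hAA 0 ⟨h0, h⟩
    simp [bndB, h0]
  | (k+2) =>
    have h1 : s (k + 1) ≠ Player.A := fun h1 => hAA (k + 1) ⟨h1, h⟩
    have h0 : s k ≠ Player.A := fun h0 => hABA k ⟨h0, player_ne_A h1, h⟩
    simp [bndB, h0, h1]

lemma bndB_succ_A {t : ℕ} (h : s t = Player.A) : bndB s (t + 1) = 2 := by
  match t with
  | 0 => simp [bndB, h]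
  | (k+1) => simp [bndB, h]

lemma bndB_succ_B {t : ℕ} (h : s t = Player.B) : bndB s (t + 1) = bndB s t - 1 := by
  have h' : s t ≠ Player.A := by rw [h]; intro hc; exact Player.noConfusion hc
  match t with
  | 0 => simp [bndB, h']
  | 1 =>
    simp only [bndB, if_neg h']
    split <;> omega
  | (k+2) =>
    simp only [bndB, if_neg h']
    split
    · omega
    · split <;> omega

end Main

/-- Let `s` be a balanced turn-order word with `0 < f_A(s) ≤ 1/3`
and containing no occurrence of the factor `ABA`. Then `B` has a winning strategy in
the game `Γ_s({a,b}, ℱ₂, ℤ)` where `ℱ₂` is the set of words of length 9 with at least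
5 letters `a`: `B` can play so that no window of 9 consecutive coloured cells ever
contains 5 or more cells coloured `a`. -/
theorem bWins_majority_game (s : ℕ → Player) (hbal : BalancedWord s) (L : ℝ)
    (hfreq : Tendsto (fun n : ℕ => (countA s 0 n : ℝ) / (n + 1)) atTop (𝓝 L))
    (hL0 : 0 < L) (hL : L ≤ 1 / 3)
    (hABA : ∀ i, ¬ (s i = Player.A ∧ s (i + 1) = Player.B ∧ s (i + 2) = Player.A)) :
    ∃ stB : StrategyZ, ∀ stA : StrategyZ, ∀ t : ℕ,
      ¬ isFinalZ F2 (playZ 2 s stA stB t) := by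
  -- First: `s` contains no factor `AA`.
  have hAA : ∀ i, ¬ (s i = Player.A ∧ s (i + 1) = Player.A) := by
    intro i ⟨h1, h2⟩
    have hcA : countA s i 1 = 2 := by
      unfold countA
      rw [Finset.filter_true_of_mem, Finset.card_range]
      intro l hl
      rw [Finset.mem_range] at hl
      interval_cases l
      · simpa using h1
      · simpa using h2
    have hwin : ∀ j, 1 ≤ countA s j 1 := by
      intro j
      have := hbal i j 1
      rw [hcA] at this
      omega
    have hge : ∀ k : ℕ, k + 1 ≤ countA s 0 (2 * k + 1) := by
      intro k
      induction k with
      | zero => simpa using hwin 0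
      | succ k ih =>
        have := countA_split s k
        have := hwin (2 * k + 2)
        omega
    have hL2 : (1 : ℝ) / 2 ≤ L := by
      have htop : Tendsto (fun k : ℕ => 2 * k + 1) atTop atTop :=
        tendsto_atTop_mono (fun k => by show k ≤ 2 * k + 1; omega) tendsto_id
      have htend : Tendsto
          (fun k : ℕ => (countA s 0 (2 * k + 1) : ℝ) / ((2 * k + 1 : ℕ) + 1))
          atTop (𝓝 L) := hfreq.comp htop
      refine ge_of_tendsto' htend ?_
      intro k
      have hk := hge k
      have hpos : (0 : ℝ) < ((2 * k + 1 : ℕ) : ℝ) + 1 := by positivity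
      show (1 : ℝ) / 2 ≤ (countA s 0 (2 * k + 1) : ℝ) / ((2 * k + 1 : ℕ) + 1)
      rw [div_le_div_iff₀ (by norm_num) hpos]
      have hk' : ((k : ℝ) + 1) ≤ (countA s 0 (2 * k + 1) : ℝ) := by exact_mod_cast hk
      push_cast
      push_cast at hk'
      linarith
    linarith
  refine ⟨stBdef, fun stA t => ?_⟩
  -- The invariant.
  have inv : ∀ t : ℕ, GoodB (playZ 2 s stA stBdef t) ∧
      ∃ S : Finset ℤ, S.card ≤ bndB s t ∧
        ∀ j, Deficient (playZ 2 s stA stBdef t) j → j ∈ S := by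
    intro t
    induction t with
    | zero =>
      refine ⟨?_, ∅, by simp [bndB], ?_⟩
      · intro a b _ _ ha _
        exact absurd (show (none : Option ℕ) = some 0 from ha) (by simp)
      · intro j hj
        obtain ⟨-, k, -, hk⟩ := hj
        exact absurd (show (none : Option ℕ) = some 0 from hk) (by simp)
    | succ t ih =>
      obtain ⟨hg, S, hSc, hcov⟩ := ih
      cases hst : s t with
      | A =>
        have hS0 : S = ∅ := by
          rw [← Finset.card_eq_zero]
          have := bndB_A hAA hABA hst
          omega
        have hd : ∀ j, ¬ Deficient (playZ 2 s stA stBdef t) j := by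
          intro j hj
          have := hcov j hj
          rw [hS0] at this
          exact absurd this (Finset.notMem_empty j)
        have hstep : playZ 2 s stA stBdef (t + 1)
            = stepZ 2 stA (playZ 2 s stA stBdef t) := by
          show stepZ 2 (match s t with | .A => stA | .B => stBdef) _ = _
          rw [hst]
        rw [hstep]
        obtain ⟨hg', S', hS2, hcov'⟩ := stepA_main stA _ hg hd
        exact ⟨hg', S', by rw [bndB_succ_A hst]; exact hS2, hcov'⟩
      | B =>
        have hstep : playZ 2 s stA stBdef (t + 1)
            = stepZ 2 stBdef (playZ 2 s stA stBdef t) := by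
          show stepZ 2 (match s t with | .A => stA | .B => stBdef) _ = _
          rw [hst]
        rw [hstep]
        obtain ⟨hg', S', hS1, hcov'⟩ := stepB_main _ hg S hcov
        refine ⟨hg', S', ?_, hcov'⟩
        rw [bndB_succ_B hst]
        omega
  exact not_final_of_goodB _ (inv t).1
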